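/- The algebraic noncommutative torus A_θ (generated over ℂ by invertible U, V with UV = qVU, q = e^{2πiθ}) is a para-Hopf algebroid over R = ℂ[U,U⁻¹], with α = β the natural embedding, coproduct Δ(UⁿVᵐ) = UⁿVᵐ ⊗_R Vᵐ, counit ε(UⁿVᵐ) = Uⁿ, and para-antipode T(UⁿVᵐ) = q^{nm} Uⁿ V^{−m}. -/

import Mathlib

open TensorProduct

noncomputable section

/-- The data of a (pre-)bialgebroid: total algebra `H`, base algebra `R`,
source map `α` (algebra map), target map `β` (anti-algebra map), a linear lift
`Δ : H → H ⊗[k] H` of the coproduct, and the counit `ε`. -/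
structure PreBialgebroid (k H R : Type) [Field k] [Ring H] [Algebra k H]
    [Ring R] [Algebra k R] where
  α : R →ₐ[k] H
  β : R →ₗ[k] H
  β_one : β 1 = 1
  β_mul : ∀ a b : R, β (a * b) = β b * β a
  αβ_comm : ∀ a b : R, α a * β b = β b * α a
  Δ : H →ₗ[k] H ⊗[k] H
  ε : H →ₗ[k] R

namespace PreBialgebroid

variable {k H R : Type} [Field k] [Ring H] [Algebra k H] [Ring R] [Algebra k R]
variable (D : PreBialgebroid k H R)

/-- The submodule of `H ⊗[k] H` by which one divides to obtain `H ⊗_R H`. -/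
def rel2 : Submodule k (H ⊗[k] H) :=
  Submodule.span k {z | ∃ (r : R) (x y : H), z = (D.β r * x) ⊗ₜ[k] y - x ⊗ₜ[k] (D.α r * y)}

/-- The projection `H ⊗[k] H → H ⊗_R H`. -/
def π2 : H ⊗[k] H →ₗ[k] (H ⊗[k] H) ⧸ D.rel2 := D.rel2.mkQ

/-- Relations for the triple tensor product `H ⊗_R H ⊗_R H` (right associated). -/
def rel3 : Submodule k (H ⊗[k] (H ⊗[k] H)) :=
  Submodule.span k {z |
    (∃ (r : R) (x y w : H), z = (D.β r * x) ⊗ₜ[k] (y ⊗ₜ[k] w) - x ⊗ₜ[k] ((D.α r * y) ⊗ₜ[k] w)) ∨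
    (∃ (r : R) (x y w : H), z = x ⊗ₜ[k] ((D.β r * y) ⊗ₜ[k] w) - x ⊗ₜ[k] (y ⊗ₜ[k] (D.α r * w)))}

def π3 : H ⊗[k] (H ⊗[k] H) →ₗ[k] (H ⊗[k] (H ⊗[k] H)) ⧸ D.rel3 := D.rel3.mkQ

/-- For a linear map `f : H → H`, the map `x ⊗ y ↦ f x * y`. -/
def mulL (f : H →ₗ[k] H) : H ⊗[k] H →ₗ[k] H :=
  TensorProduct.lift
    (LinearMap.mk₂ k (fun x y => f x * y)
      (by intro x x' y; simp [map_add, add_mul])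
      (by intro c x y; simp [map_smul, smul_mul_assoc])
      (by intro x y y'; simp [mul_add])
      (by intro c x y; simp [mul_smul_comm]))

/-- For a linear map `f : H → H`, the map `x ⊗ y ↦ f y * x`. -/
def mulR (f : H →ₗ[k] H) : H ⊗[k] H →ₗ[k] H :=
  TensorProduct.lift
    (LinearMap.mk₂ k (fun x y => f y * x)
      (by intro x x' y; simp [mul_add])
      (by intro c x y; simp [mul_smul_comm])
      (by intro x y y'; simp [map_add, add_mul])
      (by intro c x y; simp [map_smul, smul_mul_assoc]))

/-- The (lift of the) Connes–Moscovici cyclic operator in degree 2: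
`x ⊗ y ↦ Δ(T x) · (y ⊗ 1)`. -/
def tau2 (T : H →ₗ[k] H) : H ⊗[k] H →ₗ[k] H ⊗[k] H :=
  TensorProduct.lift
    (LinearMap.mk₂ k (fun x y => D.Δ (T x) * (y ⊗ₜ[k] (1 : H)))
      (by intro x x' y; simp [map_add, add_mul])
      (by intro c x y; simp [map_smul, smul_mul_assoc])
      (by intro x y y'; simp [add_tmul, mul_add])
      (by intro c x y; simp [← TensorProduct.smul_tmul', mul_smul_comm]))

/-- The bialgebroid axioms, stated for the chosen linear lift `Δ` of the coproduct
modulo the relations defining `H ⊗_R H`. -/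
structure IsBialgebroid : Prop where
  Δ_one : D.π2 (D.Δ 1) = D.π2 ((1 : H) ⊗ₜ[k] (1 : H))
  coassoc : ∀ h : H,
    D.π3 ((TensorProduct.assoc k H H H) ((D.Δ.rTensor H) (D.Δ h))) =
      D.π3 ((D.Δ.lTensor H) (D.Δ h))
  Δ_cp3 : ∀ (h : H) (r : R),
    D.π2 (D.Δ h * (D.β r ⊗ₜ[k] (1 : H) - (1 : H) ⊗ₜ[k] D.α r)) = 0
  Δ_mul : ∀ a b : H, D.π2 (D.Δ (a * b)) = D.π2 (D.Δ a * D.Δ b)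
  Δ_left : ∀ (r : R) (h : H),
    D.π2 (D.Δ (D.α r * h)) = D.π2 ((D.α r ⊗ₜ[k] (1 : H)) * D.Δ h)
  Δ_right : ∀ (r : R) (h : H),
    D.π2 (D.Δ (D.β r * h)) = D.π2 (((1 : H) ⊗ₜ[k] D.β r) * D.Δ h)
  ε_one : D.ε 1 = 1
  ε_left : ∀ (r : R) (h : H), D.ε (D.α r * h) = r * D.ε h
  ε_right : ∀ (r : R) (h : H), D.ε (D.β r * h) = D.ε h * r
  counit_l : ∀ h : H, mulL (D.α.toLinearMap ∘ₗ D.ε) (D.Δ h) = h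
  counit_r : ∀ h : H, mulR (D.β ∘ₗ D.ε) (D.Δ h) = h

/-- The para-Hopf algebroid axioms for a para-antipode `T`. -/
structure IsParaHopf (T : H →ₗ[k] H) : Prop where
  bialgebroid : D.IsBialgebroid
  T_one : T 1 = 1
  T_antimul : ∀ a b : H, T (a * b) = T b * T a
  PH1 : ∀ r : R, T (D.β r) = D.α r
  PH2 : ∀ h : H, mulL T (D.Δ h) = D.β (D.ε (T h))
  T_invol : ∀ h : H, T (T h) = h
  PH3 : ∀ h : H, D.π2 (tau2 D T (D.Δ h)) = D.π2 ((1 : H) ⊗ₜ[k] T h)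

end PreBialgebroid

section NCtorus

/-- Hypotheses saying that `A` is the algebraic noncommutative torus `A_θ`: it is
generated by invertible elements `U`, `V` with `UV = qVU`, `q = e^{2πiθ}`, and the
monomials `UⁿVᵐ` form a basis. -/
def IsNCTorus {A : Type} [Ring A] [Algebra ℂ A] (θ : ℝ) (UU VV : Aˣ)
    (b : Module.Basis (ℤ × ℤ) ℂ A) : Prop :=
  ((UU : A) * VV = Complex.exp (2 * Real.pi * Complex.I * θ) • ((VV : A) * UU)) ∧
  (∀ n m : ℤ, b (n, m) = ((UU ^ n : Aˣ) : A) * ((VV ^ m : Aˣ) : A))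

/-- The Laurent polynomial subalgebra `ℂ[U, U⁻¹]` of the noncommutative torus. -/
def laurentSub {A : Type} [Ring A] [Algebra ℂ A] (UU : Aˣ) : Subalgebra ℂ A :=
  Algebra.adjoin ℂ {(UU : A), ((UU⁻¹ : Aˣ) : A)}

end NCtorus


namespace NCT

variable {A : Type} [Ring A] [Algebra ℂ A] {θ : ℝ} {UU VV : Aˣ}
  {b : Module.Basis (ℤ × ℤ) ℂ A}

def q (θ : ℝ) : ℂ := Complex.exp (2 * Real.pi * Complex.I * θ)

lemma hq : q θ ≠ 0 := Complex.exp_ne_zero _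

def uu (UU VV : Aˣ) (n m : ℤ) : A := ((UU ^ n : Aˣ) : A) * ((VV ^ m : Aˣ) : A)

variable (ht : IsNCTorus θ UU VV b)
include ht

lemma hb (n m : ℤ) : b (n, m) = uu UU VV n m := ht.2 n m

lemma hUV : (UU : A) * VV = q θ • ((VV : A) * UU) := ht.1

lemma hVU : (VV : A) * UU = (q θ)⁻¹ • ((UU : A) * VV) := by
  rw [hUV ht, smul_smul, inv_mul_cancel₀ hq, one_smul]

lemma hVUinv : (VV : A) * ((UU⁻¹ : Aˣ) : A) = q θ • (((UU⁻¹ : Aˣ) : A) * VV) := by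
  have h := congrArg (fun x => ((UU⁻¹ : Aˣ) : A) * x * ((UU⁻¹ : Aˣ) : A)) (hUV ht)
  simp only [mul_smul_comm, smul_mul_assoc, ← mul_assoc] at h
  rw [Units.inv_mul] at h
  simp only [one_mul, mul_assoc] at h
  rw [Units.mul_inv, mul_one] at h
  rw [h]

lemma c1 (n : ℤ) : (VV : A) * ((UU ^ n : Aˣ) : A)
    = (q θ) ^ (-n) • (((UU ^ n : Aˣ) : A) * VV) := by
  induction n using Int.induction_on with
  | zero => simp
  | succ k ih =>
    have : ((UU ^ ((k : ℤ) + 1) : Aˣ) : A) = ((UU ^ (k:ℤ) : Aˣ) : A) * UU := by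
      rw [zpow_add_one]; rfl
    rw [this, ← mul_assoc, ih, smul_mul_assoc, mul_assoc, hVU ht, mul_smul_comm,
      smul_smul, ← mul_assoc]
    congr 1
    have h2 : (-((k:ℤ)+1)) = (-(k:ℤ)) + (-1) := by ring
    rw [h2, zpow_add₀ hq, zpow_neg_one]
  | pred k ih =>
    have : ((UU ^ (-(k : ℤ) - 1) : Aˣ) : A) = ((UU ^ (-(k:ℤ)) : Aˣ) : A) * ((UU⁻¹ : Aˣ) : A) := by
      rw [zpow_sub_one]; rfl
    rw [this, ← mul_assoc, ih, smul_mul_assoc, mul_assoc, hVUinv ht, mul_smul_comm,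
      smul_smul, ← mul_assoc]
    congr 1
    have h2 : (-(-(k:ℤ)-1)) = (- -(k:ℤ)) + 1 := by ring
    rw [h2, zpow_add₀ hq, zpow_one]


lemma c1inv (n : ℤ) : ((VV⁻¹ : Aˣ) : A) * ((UU ^ n : Aˣ) : A)
    = (q θ) ^ n • (((UU ^ n : Aˣ) : A) * ((VV⁻¹ : Aˣ) : A)) := by
  have h := congrArg (fun x => ((VV⁻¹ : Aˣ) : A) * x * ((VV⁻¹ : Aˣ) : A)) (c1 ht n)
  simp only [mul_smul_comm, smul_mul_assoc, ← mul_assoc] at h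
  rw [Units.inv_mul] at h
  simp only [one_mul, mul_assoc] at h
  rw [Units.mul_inv, mul_one] at h
  rw [h, smul_smul, ← zpow_add₀ hq]
  simp

lemma comm (m n : ℤ) : ((VV ^ m : Aˣ) : A) * ((UU ^ n : Aˣ) : A)
    = (q θ) ^ (-(m * n)) • (((UU ^ n : Aˣ) : A) * ((VV ^ m : Aˣ) : A)) := by
  induction m using Int.induction_on with
  | zero => simp
  | succ k ih =>
    have h1 : ((VV ^ ((k : ℤ) + 1) : Aˣ) : A) = ((VV ^ (k:ℤ) : Aˣ) : A) * VV := by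
      rw [zpow_add_one]; rfl
    rw [h1, mul_assoc, c1 ht, mul_smul_comm, ← mul_assoc, ih, smul_mul_assoc,
      smul_smul, mul_assoc, ← zpow_add₀ hq]
    congr 2
    ring
  | pred k ih =>
    have h1 : ((VV ^ (-(k : ℤ) - 1) : Aˣ) : A) = ((VV ^ (-(k:ℤ)) : Aˣ) : A) * ((VV⁻¹ : Aˣ) : A) := by
      rw [zpow_sub_one]; rfl
    rw [h1, mul_assoc, c1inv ht, mul_smul_comm, ← mul_assoc, ih, smul_mul_assoc,
      smul_smul, mul_assoc, ← zpow_add₀ hq]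
    congr 2
    ring

lemma uu_mul (n m n' m' : ℤ) : uu UU VV n m * uu UU VV n' m'
    = (q θ) ^ (-(m * n')) • uu UU VV (n + n') (m + m') := by
  unfold uu
  have hU : ((UU ^ n : Aˣ) : A) * ((UU ^ n' : Aˣ) : A) = ((UU ^ (n + n') : Aˣ) : A) := by
    rw [← Units.val_mul, ← zpow_add]
  have hV : ((VV ^ m : Aˣ) : A) * ((VV ^ m' : Aˣ) : A) = ((VV ^ (m + m') : Aˣ) : A) := by
    rw [← Units.val_mul, ← zpow_add]
  rw [mul_assoc, ← mul_assoc ((VV ^ m : Aˣ) : A), comm ht, smul_mul_assoc, mul_smul_comm]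
  congr 1
  rw [← mul_assoc, ← mul_assoc, hU, mul_assoc, hV]

omit ht in
lemma uu_one : uu UU VV 0 0 = (1 : A) := by simp [uu]

lemma u0_mul (k n m : ℤ) : uu UU VV k 0 * uu UU VV n m = uu UU VV (k + n) m := by
  have := uu_mul ht k 0 n m
  simpa using this

lemma mul_u0 (n m k : ℤ) : uu UU VV n m * uu UU VV k 0
    = (q θ) ^ (-(m * k)) • uu UU VV (n + k) (m + 0) := uu_mul ht n m k 0

omit ht

lemma Umem : (UU : A) ∈ laurentSub UU := by
  apply Algebra.subset_adjoin; simp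

lemma Uinvmem : ((UU⁻¹ : Aˣ) : A) ∈ laurentSub UU := by
  apply Algebra.subset_adjoin; simp

lemma mem_laurent (k : ℤ) : uu UU VV k 0 ∈ laurentSub UU := by
  have h0 : uu UU VV k 0 = ((UU ^ k : Aˣ) : A) := by simp [uu]
  rw [h0]
  cases k with
  | ofNat n =>
    rw [Int.ofNat_eq_coe, zpow_natCast, Units.val_pow_eq_pow_val]
    exact pow_mem Umem n
  | negSucc n =>
    rw [zpow_negSucc, ← inv_pow, Units.val_pow_eq_pow_val]
    exact pow_mem Uinvmem (n + 1)

/-- The span of the `U^k`. -/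
def sp (UU VV : Aˣ) : Submodule ℂ A := Submodule.span ℂ (Set.range fun k : ℤ => uu UU VV k 0)

include ht

lemma sp_mul_mem : ∀ x ∈ sp UU VV, ∀ y ∈ sp UU VV, x * y ∈ sp UU VV := by
  intro x hx y hy
  induction hx using Submodule.span_induction with
  | mem x hx =>
    obtain ⟨k, rfl⟩ := hx
    induction hy using Submodule.span_induction with
    | mem y hy =>
      obtain ⟨l, rfl⟩ := hy
      rw [u0_mul ht]
      exact Submodule.subset_span ⟨k + l, rfl⟩
    | zero => simpa using Submodule.zero_mem _
    | add y z _ _ hy hz => rw [mul_add]; exact Submodule.add_mem _ hy hz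
    | smul c y _ hy => rw [mul_smul_comm]; exact Submodule.smul_mem _ c hy
  | zero => simpa using Submodule.zero_mem _
  | add x z _ _ h1 h2 => rw [add_mul]; exact Submodule.add_mem _ h1 h2
  | smul c x _ h1 => rw [smul_mul_assoc]; exact Submodule.smul_mem _ c h1

lemma laurent_le_sp : ∀ x ∈ laurentSub UU, x ∈ sp UU VV := by
  intro x hx
  induction hx using Algebra.adjoin_induction with
  | mem x hx =>
    rcases hx with h | h
    · rw [h, show (UU : A) = uu UU VV 1 0 by simp [uu]]
      exact Submodule.subset_span ⟨1, rfl⟩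
    · rw [Set.mem_singleton_iff.mp h,
        show ((UU⁻¹ : Aˣ) : A) = uu UU VV (-1) 0 by simp [uu]]
      exact Submodule.subset_span ⟨-1, rfl⟩
  | algebraMap c =>
    rw [Algebra.algebraMap_eq_smul_one, ← uu_one (UU := UU) (VV := VV)]
    exact Submodule.smul_mem _ c (Submodule.subset_span ⟨0, rfl⟩)
  | add x y _ _ hx hy => exact Submodule.add_mem _ hx hy
  | mul x y _ _ hx hy => exact sp_mul_mem ht x hx y hy

lemma R_comm : ∀ x ∈ laurentSub UU, ∀ y ∈ laurentSub UU, x * y = y * x := by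
  intro x hx y hy
  have hx' := laurent_le_sp ht x hx
  have hy' := laurent_le_sp ht y hy
  clear hx hy
  induction hx' using Submodule.span_induction with
  | mem x hx =>
    obtain ⟨k, rfl⟩ := hx
    induction hy' using Submodule.span_induction with
    | mem y hy =>
      obtain ⟨l, rfl⟩ := hy
      rw [u0_mul ht, u0_mul ht, add_comm]
    | zero => simp
    | add y z _ _ h1 h2 => rw [mul_add, add_mul, h1, h2]
    | smul c y _ h1 => rw [mul_smul_comm, smul_mul_assoc, h1]
  | zero => simp
  | add x z _ _ h1 h2 => rw [mul_add, add_mul, h1, h2]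
  | smul c x _ h1 => rw [mul_smul_comm, smul_mul_assoc, h1]

omit ht

/-- The coproduct lift. -/
def Δmap (b : Module.Basis (ℤ × ℤ) ℂ A) : A →ₗ[ℂ] A ⊗[ℂ] A :=
  b.constr ℂ (fun p => b p ⊗ₜ[ℂ] b (0, p.2))

/-- The counit. -/
def εmap (UU VV : Aˣ) (b : Module.Basis (ℤ × ℤ) ℂ A) : A →ₗ[ℂ] (laurentSub UU) :=
  b.constr ℂ (fun p => (⟨uu UU VV p.1 0, mem_laurent p.1⟩ : laurentSub UU))

/-- The para-antipode. -/
def Tmap (θ : ℝ) (b : Module.Basis (ℤ × ℤ) ℂ A) : A →ₗ[ℂ] A :=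
  b.constr ℂ (fun p => (q θ) ^ (p.1 * p.2) • b (p.1, -p.2))

include ht

/-- The bialgebroid data on the noncommutative torus. -/
def Dtorus : PreBialgebroid ℂ A (laurentSub UU) where
  α := (laurentSub UU).val
  β := (laurentSub UU).val.toLinearMap
  β_one := by
    show ((1 : laurentSub UU) : A) = 1
    simp
  β_mul := fun a c => by
    have h := R_comm ht (a : A) a.2 (c : A) c.2
    show ((a * c : laurentSub UU) : A) = ((c : laurentSub UU) : A) * ((a : laurentSub UU) : A)
    rw [MulMemClass.coe_mul, h]
  αβ_comm := fun a c => R_comm ht (a : A) a.2 (c : A) c.2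
  Δ := Δmap b
  ε := εmap UU VV b

lemma Δ_apply (n m : ℤ) : (Dtorus ht).Δ (b (n, m)) = b (n, m) ⊗ₜ[ℂ] b (0, m) :=
  b.constr_basis ℂ _ (n, m)

lemma ε_apply (n m : ℤ) :
    (Dtorus ht).ε (b (n, m)) = (⟨uu UU VV n 0, mem_laurent n⟩ : laurentSub UU) :=
  b.constr_basis ℂ _ (n, m)

lemma T_apply (n m : ℤ) : Tmap θ b (b (n, m)) = (q θ) ^ (n * m) • b (n, -m) :=
  b.constr_basis ℂ _ (n, m)


lemma b_mul (n m n' m' : ℤ) : b (n, m) * b (n', m')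
    = (q θ) ^ (-(m * n')) • b (n + n', m + m') := by
  rw [hb ht, hb ht, hb ht, uu_mul ht]

lemma b00 : b (0, 0) = (1 : A) := by rw [hb ht, uu_one]

lemma bu0 (k n m : ℤ) : b (k, 0) * b (n, m) = b (k + n, m) := by
  rw [hb ht, hb ht, hb ht, u0_mul ht]

omit ht in
lemma Δmap_apply (n m : ℤ) : Δmap b (b (n, m)) = b (n, m) ⊗ₜ[ℂ] b (0, m) :=
  b.constr_basis ℂ _ (n, m)

lemma ext_basis {M : Type} [AddCommGroup M] [Module ℂ M] (f g : A →ₗ[ℂ] M)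
    (h : ∀ n m : ℤ, f (b (n, m)) = g (b (n, m))) : ∀ x, f x = g x := fun x =>
  DFunLike.congr_fun (b.ext (fun p => h p.1 p.2)) x

omit ht in
lemma π2_eq {R : Type} [Ring R] [Algebra ℂ R] (D : PreBialgebroid ℂ A R)
    (x y : A ⊗[ℂ] A) (h : x - y ∈ D.rel2) : D.π2 x = D.π2 y := by
  rw [PreBialgebroid.π2, Submodule.mkQ_apply, Submodule.mkQ_apply]
  exact (Submodule.Quotient.eq _).mpr h

set_option maxHeartbeats 1000000 in
lemma Dtorus_bialgebroid : (Dtorus ht).IsBialgebroid := by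
  set D := Dtorus ht with hD
  constructor
  · -- Δ_one
    rw [show (1 : A) = b (0, 0) from (b00 ht).symm, Δ_apply ht]
  · -- coassoc
    intro h
    have key : ((TensorProduct.assoc ℂ A A A).toLinearMap ∘ₗ
        (D.Δ.rTensor A) ∘ₗ D.Δ) = ((D.Δ.lTensor A) ∘ₗ D.Δ) := by
      apply b.ext
      rintro ⟨n, m⟩
      simp only [LinearMap.comp_apply, hD]
      rw [show (Dtorus ht).Δ = Δmap b from rfl, Δmap_apply,
        LinearMap.rTensor_tmul, LinearMap.lTensor_tmul, Δmap_apply, Δmap_apply,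
        LinearEquiv.coe_coe, TensorProduct.assoc_tmul]
    exact congrArg D.π3 (DFunLike.congr_fun key h)
  · -- Δ_cp3
    intro h r
    have hr : (r : A) ∈ sp UU VV := laurent_le_sp ht (r : A) r.2
    have hβ : D.β r = (r : A) := rfl
    have hα : D.α r = (r : A) := rfl
    rw [hβ, hα]
    revert h
    generalize (r : A) = x at hr ⊢
    induction hr using Submodule.span_induction with
    | mem x hx =>
      obtain ⟨k, rfl⟩ := hx
      apply ext_basis ht
        (D.π2 ∘ₗ (LinearMap.mulRight ℂ (uu UU VV k 0 ⊗ₜ[ℂ] (1:A)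
          - (1:A) ⊗ₜ[ℂ] uu UU VV k 0)) ∘ₗ D.Δ) 0
      intro n m
      simp only [LinearMap.comp_apply, LinearMap.mulRight_apply, LinearMap.zero_apply]
      rw [show D.Δ (b (n, m)) = b (n, m) ⊗ₜ[ℂ] b (0, m) from Δ_apply ht n m]
      rw [mul_sub, ← hb ht]
      rw [Algebra.TensorProduct.tmul_mul_tmul, Algebra.TensorProduct.tmul_mul_tmul]
      simp only [mul_one, one_mul]
      rw [b_mul ht, b_mul ht]
      simp only [mul_zero, add_zero, zero_add, TensorProduct.tmul_smul,
        ← TensorProduct.smul_tmul']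
      rw [← smul_sub, map_smul]
      convert smul_zero (M := ℂ) _
      rw [PreBialgebroid.π2, Submodule.mkQ_apply, Submodule.Quotient.mk_eq_zero]
      apply Submodule.subset_span
      refine ⟨(⟨uu UU VV k 0, mem_laurent k⟩ : laurentSub UU), b (n, m), b (0, m), ?_⟩
      have h1 : D.β ⟨uu UU VV k 0, mem_laurent k⟩ * b (n, m) = b (n + k, m) := by
        show uu UU VV k 0 * b (n, m) = _
        rw [← hb ht, bu0 ht, add_comm]
      have h2 : D.α ⟨uu UU VV k 0, mem_laurent k⟩ * b (0, m) = b (k, m) := by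
        show uu UU VV k 0 * b (0, m) = _
        rw [← hb ht, bu0 ht, add_zero]
      rw [h1, h2]
    | zero =>
      intro h
      simp
    | add x y hx hy h1 h2 =>
      intro h
      have e : D.Δ h * ((x + y) ⊗ₜ[ℂ] (1:A) - (1:A) ⊗ₜ[ℂ] (x + y))
          = D.Δ h * (x ⊗ₜ[ℂ] (1:A) - (1:A) ⊗ₜ[ℂ] x)
            + D.Δ h * (y ⊗ₜ[ℂ] (1:A) - (1:A) ⊗ₜ[ℂ] y) := by
        rw [← mul_add]
        congr 1
        rw [TensorProduct.add_tmul, TensorProduct.tmul_add]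
        abel
      rw [e, map_add, h1 h, h2 h, add_zero]
    | smul c x hx h1 =>
      intro h
      have e : D.Δ h * ((c • x) ⊗ₜ[ℂ] (1:A) - (1:A) ⊗ₜ[ℂ] (c • x))
          = c • (D.Δ h * (x ⊗ₜ[ℂ] (1:A) - (1:A) ⊗ₜ[ℂ] x)) := by
        rw [← TensorProduct.smul_tmul', TensorProduct.tmul_smul, ← smul_sub, mul_smul_comm]
      rw [e, map_smul, h1 h, smul_zero]
  · -- Δ_mul
    have key : (LinearMap.mul ℂ A).compr₂ (D.π2 ∘ₗ D.Δ)
        = ((LinearMap.mul ℂ (A ⊗[ℂ] A)).compl₁₂ D.Δ D.Δ).compr₂ D.π2 := by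
      apply b.ext; rintro ⟨n, m⟩
      apply b.ext; rintro ⟨n', m'⟩
      simp only [LinearMap.compr₂_apply, LinearMap.compl₁₂_apply, LinearMap.mul_apply',
        LinearMap.comp_apply]
      rw [b_mul ht, map_smul, map_smul,
        show D.Δ (b (n + n', m + m')) = _ from Δ_apply ht _ _,
        show D.Δ (b (n, m)) = _ from Δ_apply ht _ _,
        show D.Δ (b (n', m')) = _ from Δ_apply ht _ _,
        Algebra.TensorProduct.tmul_mul_tmul, b_mul ht, b_mul ht]
      simp only [mul_zero, neg_zero, zpow_zero, one_smul, zero_add,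
        TensorProduct.tmul_smul, ← TensorProduct.smul_tmul', map_smul]
    intro a c
    exact DFunLike.congr_fun (DFunLike.congr_fun key a) c
  · -- Δ_left
    intro r h
    have hα : D.α r = (r : A) := rfl
    have hr : (r : A) ∈ sp UU VV := laurent_le_sp ht _ r.2
    rw [hα]
    revert h
    generalize (r : A) = x at hr ⊢
    induction hr using Submodule.span_induction with
    | mem x hx =>
      obtain ⟨k, rfl⟩ := hx
      apply ext_basis ht (D.π2 ∘ₗ D.Δ ∘ₗ LinearMap.mulLeft ℂ (uu UU VV k 0))
        (D.π2 ∘ₗ LinearMap.mulLeft ℂ (uu UU VV k 0 ⊗ₜ[ℂ] (1 : A)) ∘ₗ D.Δ)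
      intro n m
      simp only [LinearMap.comp_apply, LinearMap.mulLeft_apply]
      rw [← hb ht, bu0 ht, show D.Δ (b (k + n, m)) = _ from Δ_apply ht _ _,
        show D.Δ (b (n, m)) = _ from Δ_apply ht _ _,
        Algebra.TensorProduct.tmul_mul_tmul, one_mul, hb ht k 0, ← hb ht, bu0 ht]
    | zero =>
      intro h
      simp [TensorProduct.zero_tmul]
    | add x y hx hy h1 h2 =>
      intro h
      rw [add_mul, map_add, map_add, TensorProduct.add_tmul, add_mul, map_add, h1 h, h2 h]
    | smul c x hx h1 =>
      intro h
      rw [smul_mul_assoc, map_smul, map_smul, ← TensorProduct.smul_tmul', smul_mul_assoc,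
        map_smul, h1 h]
  · -- Δ_right
    intro r h
    have hβ : D.β r = (r : A) := rfl
    have hr : (r : A) ∈ sp UU VV := laurent_le_sp ht _ r.2
    rw [hβ]
    revert h
    generalize (r : A) = x at hr ⊢
    induction hr using Submodule.span_induction with
    | mem x hx =>
      obtain ⟨k, rfl⟩ := hx
      apply ext_basis ht (D.π2 ∘ₗ D.Δ ∘ₗ LinearMap.mulLeft ℂ (uu UU VV k 0))
        (D.π2 ∘ₗ LinearMap.mulLeft ℂ ((1 : A) ⊗ₜ[ℂ] uu UU VV k 0) ∘ₗ D.Δ)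
      intro n m
      simp only [LinearMap.comp_apply, LinearMap.mulLeft_apply]
      rw [← hb ht, bu0 ht, show D.Δ (b (k + n, m)) = _ from Δ_apply ht _ _,
        show D.Δ (b (n, m)) = _ from Δ_apply ht _ _,
        Algebra.TensorProduct.tmul_mul_tmul, one_mul, bu0 ht]
      apply π2_eq
      apply Submodule.subset_span
      refine ⟨(⟨uu UU VV k 0, mem_laurent k⟩ : laurentSub UU), b (n, m), b (0, m), ?_⟩
      have h1 : D.β ⟨uu UU VV k 0, mem_laurent k⟩ * b (n, m) = b (k + n, m) := by
        show uu UU VV k 0 * b (n, m) = _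
        rw [← hb ht, bu0 ht]
      have h2 : D.α ⟨uu UU VV k 0, mem_laurent k⟩ * b (0, m) = b (k, m) := by
        show uu UU VV k 0 * b (0, m) = _
        rw [← hb ht, bu0 ht, add_zero]
      rw [h1, h2, add_zero]
    | zero =>
      intro h
      simp [TensorProduct.tmul_zero]
    | add x y hx hy h1 h2 =>
      intro h
      rw [add_mul, map_add, map_add, TensorProduct.tmul_add, add_mul, map_add, h1 h, h2 h]
    | smul c x hx h1 =>
      intro h
      rw [smul_mul_assoc, map_smul, map_smul, TensorProduct.tmul_smul, smul_mul_assoc,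
        map_smul, h1 h]
  · -- ε_one
    rw [show (1 : A) = b (0, 0) from (b00 ht).symm, ε_apply ht]
    apply Subtype.ext
    show uu UU VV 0 0 = ((1 : laurentSub UU) : A)
    rw [uu_one]
    simp
  · -- ε_left
    intro r h
    apply Subtype.ext
    rw [MulMemClass.coe_mul]
    have hα : D.α r = (r : A) := rfl
    have hr : (r : A) ∈ sp UU VV := laurent_le_sp ht _ r.2
    rw [hα]
    revert h
    generalize (r : A) = x at hr ⊢
    induction hr using Submodule.span_induction with
    | mem x hx =>
      obtain ⟨k, rfl⟩ := hx
      apply ext_basis ht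
        ((laurentSub UU).val.toLinearMap ∘ₗ D.ε ∘ₗ LinearMap.mulLeft ℂ (uu UU VV k 0))
        (LinearMap.mulLeft ℂ (uu UU VV k 0) ∘ₗ (laurentSub UU).val.toLinearMap ∘ₗ D.ε)
      intro n m
      simp only [LinearMap.comp_apply, LinearMap.mulLeft_apply, AlgHom.toLinearMap_apply,
        Subalgebra.coe_val]
      rw [← hb ht, bu0 ht, show D.ε (b (k + n, m)) = _ from ε_apply ht _ _,
        show D.ε (b (n, m)) = _ from ε_apply ht _ _]
      show uu UU VV (k + n) 0 = b (k, 0) * uu UU VV n 0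
      rw [hb ht, u0_mul ht]
    | zero => intro h; simp
    | add x y hx hy h1 h2 =>
      intro h
      rw [add_mul, map_add, Subalgebra.coe_add, add_mul, h1 h, h2 h]
    | smul c x hx h1 =>
      intro h
      rw [smul_mul_assoc, map_smul, Subalgebra.coe_smul, smul_mul_assoc, h1 h]
  · -- ε_right
    intro r h
    apply Subtype.ext
    rw [MulMemClass.coe_mul]
    have hβ : D.β r = (r : A) := rfl
    have hr : (r : A) ∈ sp UU VV := laurent_le_sp ht _ r.2
    rw [hβ]
    revert h
    generalize (r : A) = x at hr ⊢
    induction hr using Submodule.span_induction with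
    | mem x hx =>
      obtain ⟨k, rfl⟩ := hx
      apply ext_basis ht
        ((laurentSub UU).val.toLinearMap ∘ₗ D.ε ∘ₗ LinearMap.mulLeft ℂ (uu UU VV k 0))
        (LinearMap.mulRight ℂ (uu UU VV k 0) ∘ₗ (laurentSub UU).val.toLinearMap ∘ₗ D.ε)
      intro n m
      simp only [LinearMap.comp_apply, LinearMap.mulLeft_apply, LinearMap.mulRight_apply,
        AlgHom.toLinearMap_apply, Subalgebra.coe_val]
      rw [← hb ht, bu0 ht, show D.ε (b (k + n, m)) = _ from ε_apply ht _ _,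
        show D.ε (b (n, m)) = _ from ε_apply ht _ _]
      show uu UU VV (k + n) 0 = uu UU VV n 0 * b (k, 0)
      rw [hb ht, u0_mul ht, add_comm]
    | zero => intro h; simp
    | add x y hx hy h1 h2 =>
      intro h
      rw [add_mul, map_add, Subalgebra.coe_add, mul_add, h1 h, h2 h]
    | smul c x hx h1 =>
      intro h
      rw [smul_mul_assoc, map_smul, Subalgebra.coe_smul, mul_smul_comm, h1 h]
  · -- counit_l
    apply ext_basis ht (PreBialgebroid.mulL (D.α.toLinearMap ∘ₗ D.ε) ∘ₗ D.Δ) LinearMap.id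
    intro n m
    simp only [LinearMap.comp_apply, LinearMap.id_apply]
    rw [show D.Δ (b (n, m)) = _ from Δ_apply ht _ _]
    simp only [PreBialgebroid.mulL, TensorProduct.lift.tmul, LinearMap.mk₂_apply,
      LinearMap.comp_apply, AlgHom.toLinearMap_apply]
    rw [show D.ε (b (n, m)) = _ from ε_apply ht _ _]
    show uu UU VV n 0 * b (0, m) = b (n, m)
    rw [← hb ht, bu0 ht, add_zero]
  · -- counit_r
    apply ext_basis ht (PreBialgebroid.mulR (D.β ∘ₗ D.ε) ∘ₗ D.Δ) LinearMap.id
    intro n m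
    simp only [LinearMap.comp_apply, LinearMap.id_apply]
    rw [show D.Δ (b (n, m)) = _ from Δ_apply ht _ _]
    simp only [PreBialgebroid.mulR, TensorProduct.lift.tmul, LinearMap.mk₂_apply,
      LinearMap.comp_apply]
    rw [show D.ε (b (0, m)) = _ from ε_apply ht _ _]
    show uu UU VV 0 0 * b (n, m) = b (n, m)
    rw [uu_one, one_mul]

set_option maxHeartbeats 1000000 in
lemma Dtorus_paraHopf : (Dtorus ht).IsParaHopf (Tmap θ b) := by
  set D := Dtorus ht with hD
  constructor
  · exact Dtorus_bialgebroid ht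
  · -- T_one
    rw [show (1 : A) = b (0, 0) from (b00 ht).symm, T_apply ht]
    simp [b00 ht]
  · -- T_antimul
    have key : (LinearMap.mul ℂ A).compr₂ (Tmap θ b)
        = ((LinearMap.mul ℂ A).compl₁₂ (Tmap θ b) (Tmap θ b)).flip := by
      apply b.ext; rintro ⟨n, m⟩; apply b.ext; rintro ⟨n', m'⟩
      simp only [LinearMap.compr₂_apply, LinearMap.flip_apply, LinearMap.compl₁₂_apply,
        LinearMap.mul_apply']
      rw [b_mul ht, map_smul, T_apply ht, T_apply ht, T_apply ht, smul_mul_assoc,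
        mul_smul_comm, b_mul ht]
      simp only [smul_smul, ← zpow_add₀ (hq (θ := θ))]
      rw [show ((n' : ℤ) + n, -m' + -m) = (n + n', -(m + m')) from by
        simp only [Prod.mk.injEq]; omega]
      congr 2
      ring
    intro a c
    exact DFunLike.congr_fun (DFunLike.congr_fun key a) c
  · -- PH1
    intro r
    have hβ : D.β r = (r : A) := rfl
    have hα : D.α r = (r : A) := rfl
    rw [hβ, hα]
    have hr : (r : A) ∈ sp UU VV := laurent_le_sp ht _ r.2
    generalize (r : A) = x at hr ⊢
    induction hr using Submodule.span_induction with
    | mem x hx =>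
      obtain ⟨k, rfl⟩ := hx
      show Tmap θ b (uu UU VV k 0) = uu UU VV k 0
      rw [← hb ht, T_apply ht]
      simp
    | zero => simp
    | add x y hx hy h1 h2 => rw [map_add, h1, h2]
    | smul c x hx h1 => rw [map_smul, h1]
  · -- PH2
    apply ext_basis ht (PreBialgebroid.mulL (Tmap θ b) ∘ₗ D.Δ)
      ((laurentSub UU).val.toLinearMap ∘ₗ D.ε ∘ₗ Tmap θ b)
    intro n m
    simp only [LinearMap.comp_apply, AlgHom.toLinearMap_apply, Subalgebra.coe_val]
    rw [show D.Δ (b (n, m)) = _ from Δ_apply ht _ _]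
    simp only [PreBialgebroid.mulL, TensorProduct.lift.tmul, LinearMap.mk₂_apply]
    rw [T_apply ht, map_smul, Subalgebra.coe_smul, smul_mul_assoc, b_mul ht,
      show D.ε (b (n, -m)) = _ from ε_apply ht _ _]
    simp only [neg_mul, mul_zero, neg_zero, zpow_zero, one_smul, add_zero, neg_add_cancel]
    show _ = (q θ) ^ (n * m) • uu UU VV n 0
    rw [← hb ht]
  · -- T_invol
    apply ext_basis ht (Tmap θ b ∘ₗ Tmap θ b) LinearMap.id
    intro n m
    simp only [LinearMap.comp_apply, LinearMap.id_apply]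
    rw [T_apply ht, map_smul, T_apply ht, smul_smul, ← zpow_add₀ (hq (θ := θ)),
      show (n * m) + n * (-m) = 0 from by ring, zpow_zero, one_smul, neg_neg]
  · -- PH3
    apply ext_basis ht (D.π2 ∘ₗ PreBialgebroid.tau2 D (Tmap θ b) ∘ₗ D.Δ)
      (D.π2 ∘ₗ (TensorProduct.mk ℂ A A 1) ∘ₗ Tmap θ b)
    intro n m
    simp only [LinearMap.comp_apply, TensorProduct.mk_apply]
    rw [show D.Δ (b (n, m)) = _ from Δ_apply ht _ _]
    simp only [PreBialgebroid.tau2, TensorProduct.lift.tmul, LinearMap.mk₂_apply]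
    rw [T_apply ht, map_smul,
      show D.Δ (b (n, -m)) = _ from Δ_apply ht _ _, smul_mul_assoc,
      Algebra.TensorProduct.tmul_mul_tmul, mul_one, b_mul ht, TensorProduct.tmul_smul]
    simp only [neg_mul, mul_zero, neg_zero, zpow_zero, one_smul, add_zero, neg_add_cancel,
      TensorProduct.tmul_smul, ← TensorProduct.smul_tmul']
    apply π2_eq
    rw [← smul_sub]
    apply Submodule.smul_mem
    apply Submodule.subset_span
    refine ⟨(⟨uu UU VV n 0, mem_laurent n⟩ : laurentSub UU), 1, b (0, -m), ?_⟩
    have e1 : D.β ⟨uu UU VV n 0, mem_laurent n⟩ * 1 = b (n, 0) := by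
      show uu UU VV n 0 * 1 = _
      rw [mul_one, ← hb ht]
    have e2 : D.α ⟨uu UU VV n 0, mem_laurent n⟩ * b (0, -m) = b (n, -m) := by
      show uu UU VV n 0 * b (0, -m) = _
      rw [← hb ht, bu0 ht, add_zero]
    rw [e1, e2]

end NCT


/-- the noncommutative torus `A_θ` is a para-Hopf algebroid over
`R = ℂ[U,U⁻¹]`, with `α = β` the inclusion, `Δ(UⁿVᵐ) = UⁿVᵐ ⊗_R Vᵐ`,
`ε(UⁿVᵐ) = Uⁿ` and `T(UⁿVᵐ) = q^{nm} Uⁿ V^{-m}`. -/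
theorem ncTorus_is_paraHopf {A : Type} [Ring A] [Algebra ℂ A] (θ : ℝ)
    (UU VV : Aˣ) (b : Module.Basis (ℤ × ℤ) ℂ A) (htorus : IsNCTorus θ UU VV b) :
    ∃ (D : PreBialgebroid ℂ A (laurentSub UU)) (T : A →ₗ[ℂ] A),
      D.IsParaHopf T ∧
      D.α = (laurentSub UU).val ∧
      D.β = (laurentSub UU).val.toLinearMap ∧
      (∀ n m : ℤ,
        D.π2 (D.Δ (b (n, m))) = D.π2 (b (n, m) ⊗ₜ[ℂ] b (0, m)) ∧
        (D.ε (b (n, m)) : A) = b (n, 0) ∧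
        T (b (n, m)) = (Complex.exp (2 * Real.pi * Complex.I * θ) ^ (n * m)) • b (n, -m)) := by
  refine ⟨NCT.Dtorus htorus, NCT.Tmap θ b, NCT.Dtorus_paraHopf htorus, rfl, rfl, ?_⟩
  intro n m
  refine ⟨?_, ?_, ?_⟩
  · rw [show (NCT.Dtorus htorus).Δ (b (n, m)) = _ from NCT.Δ_apply htorus n m]
  · rw [show (NCT.Dtorus htorus).ε (b (n, m)) = _ from NCT.ε_apply htorus n m]
    show NCT.uu UU VV n 0 = b (n, 0)
    rw [NCT.hb htorus]
  · exact NCT.T_apply htorus n m
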